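/- For n ≥ 1, |S_n| = 3(w_n − 2)² + 2(w_n − 2) − 6(w_n − w_{n−1})(w_n − w_{n−1} − 1). Concretely, |S_{2k+1}| = 42·4^k − 34·2^k + 8 for k ≥ 0, and |S_{2k}| = 21·4^k − 24·2^k + 8 for k ≥ 1. -/

import Mathlib

def w (n : ℕ) : ℕ := if n % 2 = 0 then 3 * 2 ^ (n / 2) else 4 * 2 ^ (n / 2)

def Sset (n : ℕ) : Set GaussianInt :=
  {z | z ≠ 0 ∧ |z.re| ≤ (w n : ℤ) - 2 ∧ |z.im| ≤ (w n : ℤ) - 2 ∧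
    |z.re| + |z.im| ≤ (w (n + 1) : ℤ) - 3 ∧ ¬ (2 : ℤ) ∣ Int.gcd z.re z.im}

noncomputable def oct (a b : ℤ) : Finset (ℤ × ℤ) :=
  (Finset.Icc (-a) a ×ˢ Finset.Icc (-a) a).filter (fun p => |p.1| + |p.2| ≤ b)

lemma mem_oct {a b : ℤ} {p : ℤ × ℤ} :
    p ∈ oct a b ↔ |p.1| ≤ a ∧ |p.2| ≤ a ∧ |p.1| + |p.2| ≤ b := by
  simp [oct, Finset.mem_filter, Finset.mem_product, Finset.mem_Icc, abs_le]
  tauto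

lemma gcd_two_dvd {x y : ℤ} : (2:ℤ) ∣ (Int.gcd x y : ℤ) ↔ (2:ℤ) ∣ x ∧ (2:ℤ) ∣ y :=
  ⟨fun h => ⟨h.trans (Int.gcd_dvd_left x y), h.trans (Int.gcd_dvd_right x y)⟩,
   fun h => Int.dvd_coe_gcd h.1 h.2⟩

lemma Sset_eq (n : ℕ) :
    Sset n = ↑(((oct ((w n : ℤ) - 2) ((w (n+1) : ℤ) - 3)).filter
      (fun p => ¬((2:ℤ) ∣ p.1 ∧ (2:ℤ) ∣ p.2))).image
      (fun p => (⟨p.1, p.2⟩ : GaussianInt))) := by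
  ext z
  obtain ⟨x, y⟩ := z
  simp only [Sset, Set.mem_setOf_eq, Finset.coe_image, Set.mem_image, Finset.mem_coe,
    Finset.mem_filter, mem_oct, Prod.exists]
  constructor
  · rintro ⟨hz, hx, hy, hb, hg⟩
    exact ⟨x, y, ⟨⟨hx, hy, hb⟩, fun h => hg (gcd_two_dvd.2 h)⟩, rfl⟩
  · rintro ⟨u, v, ⟨⟨hu, hv, hb⟩, hp⟩, heq⟩
    obtain ⟨rfl, rfl⟩ : u = x ∧ v = y := ⟨congrArg Zsqrtd.re heq, congrArg Zsqrtd.im heq⟩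
    refine ⟨?_, hu, hv, hb, fun h => hp (gcd_two_dvd.1 h)⟩
    intro h0
    apply hp
    have hre : u = 0 := congrArg Zsqrtd.re h0
    have him : v = 0 := congrArg Zsqrtd.im h0
    exact ⟨hre ▸ dvd_zero 2, him ▸ dvd_zero 2⟩

lemma Sset_ncard (n : ℕ) :
    ((Sset n).ncard : ℤ) = (((oct ((w n : ℤ) - 2) ((w (n+1) : ℤ) - 3)).filter
      (fun p => ¬((2:ℤ) ∣ p.1 ∧ (2:ℤ) ∣ p.2))).card : ℤ) := by
  rw [Sset_eq, Set.ncard_coe_finset, Finset.card_image_of_injective _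
    (fun p q h => Prod.ext (congrArg Zsqrtd.re h) (congrArg Zsqrtd.im h))]

lemma w_even' (k : ℕ) : w (2*k) = 3 * 2^k := by
  rw [w, if_pos (by omega), show 2*k/2 = k by omega]

lemma w_odd' (k : ℕ) : w (2*k+1) = 4 * 2^k := by
  rw [w, if_neg (by omega), show (2*k+1)/2 = k by omega]

lemma icc_succ (m t : ℤ) (h : m ≤ t + 1) : Finset.Icc m (t+1) = insert (t+1) (Finset.Icc m t) := by
  ext x; simp [Finset.mem_Icc]; omega
lemma gauss (m : ℤ) (n : ℕ) : ∑ x ∈ Finset.Icc m (m + n), (x:ℤ) * 2 = (n+1)*(2*m+n) := by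
  induction n with
  | zero => simp; ring
  | succ n ih =>
    have h : (m + (n+1:ℕ)) = (m + n) + 1 := by push_cast; ring
    rw [h, icc_succ m (m+n) (by omega), Finset.sum_insert (by simp)]
    rw [ih]; push_cast; ring
lemma gauss' (m n : ℤ) (h : m ≤ n + 1) : ∑ x ∈ Finset.Icc m n, (x:ℤ) * 2 = (n+1-m)*(m+n) := by
  rcases eq_or_lt_of_le h with h' | h'
  · rw [Finset.Icc_eq_empty (by omega)]; simp; ring_nf; omega
  · obtain ⟨k, hk⟩ : ∃ k : ℕ, n = m + k := ⟨(n - m).toNat, by omega⟩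
    subst hk; rw [gauss]; ring

lemma key_sum (a b : ℤ) (h0 : 0 ≤ a) (h1 : a ≤ b) (h2 : b ≤ 2*a) :
    ∑ x ∈ Finset.Icc (-a) a, (2 * min a (b - |x|) + 1)
      = (2*a+1)^2 - 2*(2*a-b)*(2*a-b+1) := by
  set d : ℤ := b - a with hd
  have hd0 : 0 ≤ d := by omega
  have hda : d ≤ a := by omega
  have hsplit : Finset.Icc (-a) a
      = (Finset.Icc (-a) (-(d+1)) ∪ Finset.Icc (-d) d) ∪ Finset.Icc (d+1) a := by
    ext x; simp [Finset.mem_Icc]; omega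
  have hdisj1 : Disjoint (Finset.Icc (-a) (-(d+1))) (Finset.Icc (-d) d) := by
    rw [Finset.disjoint_left]; intro x hx hx'; simp [Finset.mem_Icc] at hx hx'; omega
  have hdisj2 : Disjoint (Finset.Icc (-a) (-(d+1)) ∪ Finset.Icc (-d) d) (Finset.Icc (d+1) a) := by
    rw [Finset.disjoint_left]; intro x hx hx'
    simp [Finset.mem_Icc] at hx hx'; omega
  rw [hsplit, Finset.sum_union hdisj2, Finset.sum_union hdisj1]
  have hmid : ∑ x ∈ Finset.Icc (-d) d, (2 * min a (b - |x|) + 1) = (2*d+1) * (2*a+1) := by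
    rw [Finset.sum_congr rfl (g := fun _ => 2*a+1) ?_]
    · rw [Finset.sum_const, Int.card_Icc]
      rw [show d + 1 - -d = 2*d+1 by ring, nsmul_eq_mul, Int.toNat_of_nonneg (by omega)]
    · intro x hx
      simp only [Finset.mem_Icc] at hx
      have : |x| ≤ d := abs_le.2 ⟨hx.1, hx.2⟩
      rw [min_eq_left (by omega)]
  have hright : ∑ x ∈ Finset.Icc (d+1) a, (2 * min a (b - |x|) + 1)
      = (a-d)*(2*b+1) - (a-d)*(a+d+1) := by
    rw [Finset.sum_congr rfl (g := fun x => (2*b+1) - x*2) ?_]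
    · rw [Finset.sum_sub_distrib, Finset.sum_const, Int.card_Icc, gauss' (d+1) a (by omega)]
      rw [nsmul_eq_mul, Int.toNat_of_nonneg (by omega)]; ring
    · intro x hx
      simp only [Finset.mem_Icc] at hx
      rw [abs_of_nonneg (by omega), min_eq_right (by omega)]; ring
  have himg : Finset.Icc (-a) (-(d+1)) = Finset.image Neg.neg (Finset.Icc (d+1) a) := by
    ext x
    simp only [Finset.mem_Icc, Finset.mem_image]
    constructor
    · intro h; exact ⟨-x, by omega, by omega⟩
    · rintro ⟨y, hy, rfl⟩; omega
  have hleft : ∑ x ∈ Finset.Icc (-a) (-(d+1)), (2 * min a (b - |x|) + 1)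
      = (a-d)*(2*b+1) - (a-d)*(a+d+1) := by
    rw [himg, Finset.sum_image (by intro u _ v _ h; omega)]
    rw [← hright]
    exact Finset.sum_congr rfl fun x _ => by rw [abs_neg]
  rw [hmid, hright, hleft, hd]; ring

lemma oct_card (a b : ℤ) (h0 : 0 ≤ a) (h1 : a ≤ b) (h2 : b ≤ 2*a) :
    ((oct a b).card : ℤ) = (2*a+1)^2 - 2*(2*a-b)*(2*a-b+1) := by
  have hrep : oct a b = (Finset.Icc (-a) a).biUnion
      (fun x => (Finset.Icc (-(min a (b-|x|))) (min a (b-|x|))).image (fun y => (x,y))) := by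
    ext ⟨u,v⟩
    simp only [mem_oct, Finset.mem_biUnion, Finset.mem_Icc, Finset.mem_image, Prod.mk.injEq]
    constructor
    · rintro ⟨hu, hv, hb⟩
      refine ⟨u, by rw [← abs_le]; exact hu, v, ?_, rfl, rfl⟩
      rw [← abs_le]
      exact le_min hv (by linarith)
    · rintro ⟨x, hx, y, hy, rfl, rfl⟩
      rw [← abs_le] at hx hy
      have h1 : |y| ≤ a := le_trans hy (min_le_left _ _)
      have h2 : |y| ≤ b - |x| := le_trans hy (min_le_right _ _)
      exact ⟨hx, h1, by linarith⟩
  have hdisj : ∀ x ∈ Finset.Icc (-a) a, ∀ y ∈ Finset.Icc (-a) a, x ≠ y →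
      Disjoint ((Finset.Icc (-(min a (b-|x|))) (min a (b-|x|))).image (fun z => (x,z)))
        ((Finset.Icc (-(min a (b-|y|))) (min a (b-|y|))).image (fun z => (y,z))) := by
    intro x _ y _ hxy
    rw [Finset.disjoint_left]
    rintro p hp hq
    simp only [Finset.mem_image] at hp hq
    obtain ⟨_, _, rfl⟩ := hp
    obtain ⟨_, _, h⟩ := hq
    exact hxy (congrArg Prod.fst h).symm
  rw [hrep, Finset.card_biUnion hdisj]
  push_cast
  rw [Finset.sum_congr rfl (g := fun x => 2 * min a (b - |x|) + 1) ?_]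
  · exact key_sum a b h0 h1 h2
  · intro x hx
    simp only [Finset.mem_Icc] at hx
    have hm : 0 ≤ min a (b - |x|) := le_min h0 (by rw [← abs_le] at hx; omega)
    rw [Finset.card_image_of_injective _ (fun u v h => (Prod.ext_iff.1 h).2),
      Int.card_Icc]
    rw [show min a (b-|x|) + 1 - -(min a (b-|x|)) = 2 * min a (b-|x|) + 1 by ring]
    rw [Int.toNat_of_nonneg (by linarith)]

lemma even_eq (a' b' : ℤ) :
    (oct (2*a') (2*b'+1)).filter (fun p => (2:ℤ) ∣ p.1 ∧ (2:ℤ) ∣ p.2)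
      = (oct a' b').image (fun p => (2*p.1, 2*p.2)) := by
  ext ⟨u,v⟩
  simp only [Finset.mem_filter, mem_oct, Finset.mem_image, Prod.mk.injEq, Prod.exists]
  constructor
  · rintro ⟨⟨hu, hv, hb⟩, h2u, h2v⟩
    refine ⟨u/2, v/2, ⟨?_, ?_, ?_⟩, by omega, by omega⟩ <;>
      (simp only [Int.abs_eq_natAbs] at *; omega)
  · rintro ⟨s, t, ⟨hs, ht, hb⟩, rfl, rfl⟩
    refine ⟨⟨?_, ?_, ?_⟩, ⟨s, rfl⟩, ⟨t, rfl⟩⟩ <;>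
      (simp only [Int.abs_eq_natAbs] at *; omega)

lemma countP (a' b' : ℤ) (h0 : 0 ≤ a') (h1 : a' ≤ b') (h2 : b' < 2*a') :
    ((((oct (2*a') (2*b'+1)).filter (fun p => ¬((2:ℤ) ∣ p.1 ∧ (2:ℤ) ∣ p.2))).card : ℤ)
     = ((4*a'+1)^2 - 2*(4*a'-2*b'-1)*(4*a'-2*b'))
       - ((2*a'+1)^2 - 2*(2*a'-b')*(2*a'-b'+1))) := by
  have hsum := Finset.card_filter_add_card_filter_not
    (s := oct (2*a') (2*b'+1)) (p := fun p => (2:ℤ) ∣ p.1 ∧ (2:ℤ) ∣ p.2)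
  have hpos : (((oct (2*a') (2*b'+1)).filter
      (fun p => (2:ℤ) ∣ p.1 ∧ (2:ℤ) ∣ p.2)).card : ℤ)
      = (2*a'+1)^2 - 2*(2*a'-b')*(2*a'-b'+1) := by
    rw [even_eq, Finset.card_image_of_injective _
      (by rintro ⟨x1,y1⟩ ⟨x2,y2⟩ h; simp [Prod.ext_iff] at h ⊢; omega)]
    exact oct_card a' b' h0 h1 (by omega)
  have hbig : ((oct (2*a') (2*b'+1)).card : ℤ)
      = (4*a'+1)^2 - 2*(4*a'-2*b'-1)*(4*a'-2*b') := by
    have := oct_card (2*a') (2*b'+1) (by omega) (by omega) (by omega)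
    rw [this]; ring
  omega

lemma two_pow_sq (k : ℕ) : (4:ℤ)^k = 2^k * 2^k := by
  rw [show (4:ℤ) = 2*2 by norm_num, mul_pow]

lemma odd_case (k : ℕ) : ((Sset (2*k+1)).ncard : ℤ) = 42*4^k - 34*2^k + 8 := by
  have ht : (0:ℤ) < 2^k := by positivity
  rw [Sset_ncard, show 2*k+1+1 = 2*(k+1) by ring, w_odd', w_even']
  push_cast
  rw [show ((4:ℤ) * 2^k - 2) = 2 * (2*2^k - 1) by ring,
      show ((3:ℤ) * 2^(k+1) - 3) = 2 * (3*2^k - 2) + 1 by rw [pow_succ]; ring]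
  rw [countP _ _ (by omega) (by omega) (by omega)]
  rw [two_pow_sq]; ring

lemma even_case (k : ℕ) (hk : 1 ≤ k) :
    ((Sset (2*k)).ncard : ℤ) = 21*4^k - 24*2^k + 8 := by
  obtain ⟨j, rfl⟩ : ∃ j, k = j+1 := ⟨k-1, by omega⟩
  have ht : (0:ℤ) < 2^j := by positivity
  rw [Sset_ncard, w_even', show 2*(j+1)+1 = 2*(j+1)+1 by rfl, w_odd' (j+1)]
  push_cast
  rw [show ((3:ℤ) * 2^(j+1) - 2) = 2 * (3*2^j - 1) by rw [pow_succ]; ring,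
      show ((4:ℤ) * 2^(j+1) - 3) = 2 * (4*2^j - 2) + 1 by rw [pow_succ]; ring]
  rw [countP _ _ (by omega) (by omega) (by omega)]
  rw [two_pow_sq, show ((2:ℤ)^(j+1)) = 2*2^j by rw [pow_succ]; ring]
  ring

theorem Sset_card :
    (∀ n : ℕ, 1 ≤ n →
      ((Sset n).ncard : ℤ) =
        3 * ((w n : ℤ) - 2) ^ 2 + 2 * ((w n : ℤ) - 2) -
          6 * ((w n : ℤ) - (w (n - 1) : ℤ)) * ((w n : ℤ) - (w (n - 1) : ℤ) - 1)) ∧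
    (∀ k : ℕ, ((Sset (2 * k + 1)).ncard : ℤ) = 42 * 4 ^ k - 34 * 2 ^ k + 8) ∧
    (∀ k : ℕ, 1 ≤ k → ((Sset (2 * k)).ncard : ℤ) = 21 * 4 ^ k - 24 * 2 ^ k + 8) := by
  refine ⟨?_, odd_case, even_case⟩
  intro n hn
  rcases Nat.even_or_odd n with he | ho
  · obtain ⟨k, hk⟩ := he
    obtain rfl : n = 2*k := by omega
    obtain ⟨j, rfl⟩ : ∃ j, k = j+1 := ⟨k-1, by omega⟩
    rw [even_case (j+1) (by omega), show 2*(j+1)-1 = 2*j+1 by omega, w_odd' j, w_even' (j+1)]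
    push_cast
    rw [two_pow_sq, show ((2:ℤ)^(j+1)) = 2*2^j by rw [pow_succ]; ring]
    ring
  · obtain ⟨k, hk⟩ := ho
    obtain rfl : n = 2*k+1 := by omega
    rw [odd_case, show 2*k+1-1 = 2*k by omega, w_even', w_odd']
    push_cast
    rw [two_pow_sq]
    ring
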